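/- Let (Ω,𝓕) be a measurable space with 𝓕 = σ({J₁, J₂, …}) generated by a countable family of measurable sets. Define f : Ω → [0,1) by f = Σₙ 3⁻ⁿ 𝟙_{Jₙ}. Then f is 𝓕-measurable, and the class 𝓘 = { f⁻¹([0,a)) : 0 ≤ a ≤ 1 } contains ∅ and Ω, is totally ordered by inclusion, and satisfies σ(𝓘) = 𝓕. -/
import Mathlib

set_option linter.unreachableTactic false
set_option linter.unusedTactic false

open MeasureTheory Set

/-- value of a bit string of length m -/
noncomputable def ternBV (m : ℕ) (s : ℕ → Bool) : ℝ :=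
  ∑ k ∈ Finset.range m, cond (s k) ((3:ℝ)⁻¹ ^ (k+1)) 0

lemma ternBV_nonneg (m : ℕ) (s : ℕ → Bool) : 0 ≤ ternBV m s := by
  apply Finset.sum_nonneg
  intro k _
  cases s k <;> simp

lemma tern_geom_sum (m : ℕ) :
    ∑ k ∈ Finset.range m, (3:ℝ)⁻¹ ^ (k+1) = (1 - (3:ℝ)⁻¹ ^ m) / 2 := by
  induction m with
  | zero => simp
  | succ n ih => rw [Finset.sum_range_succ, ih]; ring

lemma ternBV_le (m : ℕ) (s : ℕ → Bool) : ternBV m s ≤ (1 - (3:ℝ)⁻¹ ^ m) / 2 := by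
  rw [← tern_geom_sum]
  apply Finset.sum_le_sum
  intro k _
  cases s k <;> simp

lemma ternBV_succ (m : ℕ) (s : ℕ → Bool) :
    ternBV (m+1) s = ternBV m s + cond (s m) ((3:ℝ)⁻¹ ^ (m+1)) 0 := by
  rw [ternBV, Finset.sum_range_succ]; rfl

lemma ternBV_sep (m : ℕ) (s t : ℕ → Bool) :
    (∀ k < m, s k = t k) ∨ (3:ℝ)⁻¹ ^ m ≤ |ternBV m s - ternBV m t| := by
  induction m with
  | zero => exact Or.inl (by omega)
  | succ n ih =>
    have h3 : (0:ℝ) < (3:ℝ)⁻¹ ^ (n+1) := by positivity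
    have h3' : 3 * (3:ℝ)⁻¹ ^ (n+1) = (3:ℝ)⁻¹ ^ n := by
      rw [pow_succ]; ring
    set c : ℝ := (cond (s n) ((3:ℝ)⁻¹ ^ (n+1)) 0) - (cond (t n) ((3:ℝ)⁻¹ ^ (n+1)) 0) with hc
    have hD : ternBV (n+1) s - ternBV (n+1) t = (ternBV n s - ternBV n t) + c := by
      rw [ternBV_succ, ternBV_succ, hc]; ring
    by_cases hb : s n = t n
    · have hc0 : c = 0 := by rw [hc, hb]; ring
      rcases ih with h | h
      · left; intro k hk
        rcases Nat.lt_succ_iff_lt_or_eq.mp hk with h' | h'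
        · exact h k h'
        · subst h'; exact hb
      · right
        rw [hD, hc0, add_zero]
        have : (3:ℝ)⁻¹ ^ (n+1) ≤ (3:ℝ)⁻¹ ^ n := by nlinarith
        linarith
    · have hcabs : |c| = (3:ℝ)⁻¹ ^ (n+1) := by
        rw [hc]
        cases hs : s n <;> cases ht : t n <;> simp [hs, ht] at hb ⊢
        all_goals first
          | exact abs_of_nonneg h3.le
          | (rw [abs_of_nonpos (by linarith), neg_sub]; simp)
          | simp [abs_of_nonneg h3.le]
      right
      rcases ih with h | h
      · have hv : ternBV n s = ternBV n t := by
          unfold ternBV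
          exact Finset.sum_congr rfl fun k hk => by rw [h k (Finset.mem_range.mp hk)]
        rw [hD, hv, sub_self, zero_add, hcabs]
      · rw [hD]
        have h1 : |ternBV n s - ternBV n t| ≤ |ternBV n s - ternBV n t + c| + |c| := by
          calc |ternBV n s - ternBV n t| = |(ternBV n s - ternBV n t + c) - c| := by ring_nf
          _ ≤ _ := abs_sub _ _
        rw [hcabs] at h1
        nlinarith

section Main

variable {Ω : Type*} (J : ℕ → Set Ω) (f : Ω → ℝ)
  (hf : ∀ ω, f ω = ∑' n : ℕ, (3:ℝ)⁻¹ ^ (n + 1) * (J n).indicator 1 ω)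

lemma tern_term_nonneg (n : ℕ) (ω : Ω) :
    0 ≤ (3:ℝ)⁻¹ ^ (n + 1) * (J n).indicator 1 ω := by
  apply mul_nonneg (by positivity)
  apply Set.indicator_nonneg; intro; norm_num

lemma tern_term_le (n : ℕ) (ω : Ω) :
    (3:ℝ)⁻¹ ^ (n + 1) * (J n).indicator 1 ω ≤ (3:ℝ)⁻¹ ^ (n + 1) := by
  by_cases h : ω ∈ J n
  · simp [Set.indicator_of_mem h]
  · simp [Set.indicator_of_notMem h]

lemma tern_geom_summable : Summable (fun n : ℕ => (3:ℝ)⁻¹ ^ (n + 1)) := by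
  apply Summable.comp_injective ?_ (add_left_injective 1)
  exact summable_geometric_of_lt_one (by norm_num) (by norm_num)

lemma tern_summable (ω : Ω) :
    Summable (fun n => (3:ℝ)⁻¹ ^ (n + 1) * (J n).indicator 1 ω) :=
  Summable.of_nonneg_of_le (fun n => tern_term_nonneg J n ω) (fun n => tern_term_le J n ω) tern_geom_summable

lemma tern_geom_tail (m : ℕ) : ∑' k : ℕ, (3:ℝ)⁻¹ ^ (k + m + 1) = (3:ℝ)⁻¹ ^ m / 2 := by
  have : ∀ k : ℕ, (3:ℝ)⁻¹ ^ (k + m + 1) = (3:ℝ)⁻¹ ^ m / 3 * ((3:ℝ)⁻¹) ^ k := by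
    intro k; rw [show k + m + 1 = m + 1 + k by ring, pow_add, pow_succ]; ring
  rw [tsum_congr this, tsum_mul_left, tsum_geometric_of_lt_one (by norm_num) (by norm_num)]
  norm_num
  ring

include hf in
/-- forward: if the first m digits of ω agree with s, then f ω ∈ [v, v + 3⁻ᵐ/2]. -/
lemma tern_fwd (m : ℕ) (s : ℕ → Bool) (ω : Ω)
    (h : ∀ k < m, (ω ∈ J k ↔ s k = true)) :
    ternBV m s ≤ f ω ∧ f ω ≤ ternBV m s + (3:ℝ)⁻¹ ^ m / 2 := by
  have hsum := tern_summable J ω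
  have hsplit := Summable.sum_add_tsum_nat_add m hsum
  have hhead : ∑ k ∈ Finset.range m, (3:ℝ)⁻¹ ^ (k + 1) * (J k).indicator 1 ω = ternBV m s := by
    apply Finset.sum_congr rfl
    intro k hk
    have hk' := Finset.mem_range.mp hk
    by_cases hω : ω ∈ J k
    · rw [Set.indicator_of_mem hω, ((h k hk').mp hω)]; simp
    · rw [Set.indicator_of_notMem hω]
      have : s k = false := by
        cases hsk : s k
        · rfl
        · exact absurd ((h k hk').mpr hsk) hω
      rw [this]; simp
  have htail0 : 0 ≤ ∑' k : ℕ, (3:ℝ)⁻¹ ^ (k + m + 1) * (J (k + m)).indicator 1 ω :=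
    tsum_nonneg fun k => tern_term_nonneg J (k + m) ω
  have htail1 : ∑' k : ℕ, (3:ℝ)⁻¹ ^ (k + m + 1) * (J (k + m)).indicator 1 ω
      ≤ (3:ℝ)⁻¹ ^ m / 2 := by
    rw [← tern_geom_tail m]
    apply Summable.tsum_le_tsum (fun k => tern_term_le J (k + m) ω)
    · exact hsum.comp_injective (add_left_injective m)
    · exact (tern_geom_summable).comp_injective (add_left_injective m)
  rw [hf ω, ← hsplit, hhead]
  constructor <;> linarith

include hf in
lemma tern_master (m : ℕ) (s : ℕ → Bool) (ω : Ω) :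
    (∀ k < m, (ω ∈ J k ↔ s k = true)) ↔
      (ternBV m s ≤ f ω ∧ f ω < ternBV m s + (3:ℝ)⁻¹ ^ m) := by
  have h3 : (0:ℝ) < (3:ℝ)⁻¹ ^ m := by positivity
  constructor
  · intro h
    have := tern_fwd J f hf m s ω h
    constructor
    · exact this.1
    · linarith [this.2]
  · intro ⟨h1, h2⟩
    classical
    set t : ℕ → Bool := fun k => decide (ω ∈ J k) with ht
    have hdig : ∀ k < m, (ω ∈ J k ↔ t k = true) := by
      intro k _; simp [ht]
    have hft := tern_fwd J f hf m t ω hdig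
    have hsep := ternBV_sep m s t
    rcases hsep with hsep | hsep
    · intro k hk
      rw [hdig k hk, hsep k hk]
    · exfalso
      rcases abs_le.mp (le_refl |ternBV m s - ternBV m t|) with _
      rcases abs_cases (ternBV m s - ternBV m t) with ⟨he, _⟩ | ⟨he, _⟩ <;>
        rw [he] at hsep <;> linarith [hft.1, hft.2]

end Main

theorem ternary_embedding_generates {Ω : Type*} [m : MeasurableSpace Ω]
    (J : ℕ → Set Ω) (hJ : ∀ n, MeasurableSet (J n))
    (hgen : MeasurableSpace.generateFrom {S | ∃ n : ℕ, S = J n} = m)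
    (f : Ω → ℝ) (hf : ∀ ω, f ω = ∑' n : ℕ, (3:ℝ)⁻¹ ^ (n + 1) * (J n).indicator 1 ω) :
    Measurable f ∧ (∀ ω, f ω ∈ Set.Ico (0:ℝ) 1) ∧
    (∅ ∈ ({S | ∃ a ∈ Set.Icc (0:ℝ) 1, S = {ω | f ω < a}} : Set (Set Ω))) ∧
    (Set.univ ∈ ({S | ∃ a ∈ Set.Icc (0:ℝ) 1, S = {ω | f ω < a}} : Set (Set Ω))) ∧
    (∀ S₁ ∈ ({S | ∃ a ∈ Set.Icc (0:ℝ) 1, S = {ω | f ω < a}} : Set (Set Ω)),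
      ∀ S₂ ∈ ({S | ∃ a ∈ Set.Icc (0:ℝ) 1, S = {ω | f ω < a}} : Set (Set Ω)),
        S₁ ⊆ S₂ ∨ S₂ ⊆ S₁) ∧
    MeasurableSpace.generateFrom {S | ∃ a ∈ Set.Icc (0:ℝ) 1, S = {ω | f ω < a}} = m := by
  classical
  -- bounds: from the empty-prefix case of tern_fwd
  have hbounds : ∀ ω, 0 ≤ f ω ∧ f ω ≤ 1/2 := by
    intro ω
    have := tern_fwd J f hf 0 (fun _ => false) ω (by omega)
    simp [ternBV] at this
    constructor <;> linarith [this.1, this.2]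
  -- measurability of f
  have hmeas : Measurable f := by
    apply measurable_of_tendsto_metrizable
      (f := fun n ω => ∑ k ∈ Finset.range n, (3:ℝ)⁻¹ ^ (k+1) * (J k).indicator 1 ω)
    · intro i
      apply Finset.measurable_sum
      intro k _
      exact (measurable_one.indicator (hJ k)).const_mul _
    · rw [tendsto_pi_nhds]
      intro ω
      have := (tern_summable J ω).hasSum.tendsto_sum_nat
      rw [← hf ω] at this
      exact this
  refine ⟨hmeas, ?_, ?_, ?_, ?_, ?_⟩
  · intro ω
    exact ⟨(hbounds ω).1, by linarith [(hbounds ω).2]⟩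
  · refine ⟨0, ⟨le_refl 0, by norm_num⟩, ?_⟩
    ext ω
    simp only [Set.mem_empty_iff_false, Set.mem_setOf_eq, false_iff, not_lt]
    exact (hbounds ω).1
  · refine ⟨1, ⟨by norm_num, le_refl 1⟩, ?_⟩
    ext ω
    simp only [Set.mem_univ, Set.mem_setOf_eq, true_iff]
    linarith [(hbounds ω).2]
  · rintro S₁ ⟨a₁, _, rfl⟩ S₂ ⟨a₂, _, rfl⟩
    rcases le_total a₁ a₂ with h | h
    · left; intro ω hω; exact lt_of_lt_of_le hω h
    · right; intro ω hω; exact lt_of_lt_of_le hω h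
  · apply le_antisymm
    · apply MeasurableSpace.generateFrom_le
      rintro S ⟨a, _, rfl⟩
      exact measurableSet_lt hmeas measurable_const
    · rw [← hgen]
      apply MeasurableSpace.generateFrom_le
      rintro S ⟨n, rfl⟩
      -- J n is a finite union of interval preimages
      set G := MeasurableSpace.generateFrom
        ({S | ∃ a ∈ Set.Icc (0:ℝ) 1, S = {ω | f ω < a}} : Set (Set Ω)) with hG
      have hIcc : ∀ a ∈ Set.Icc (0:ℝ) 1, MeasurableSet[G] {ω | f ω < a} := by
        intro a ha
        exact MeasurableSpace.measurableSet_generateFrom ⟨a, ha, rfl⟩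
      -- the extension of t : Fin n → Bool by a final `true`
      have key : J n = ⋃ t : Fin n → Bool,
          ({ω | f ω < ternBV (n+1) (fun k => if h : k < n then t ⟨k, h⟩ else true) + (3:ℝ)⁻¹ ^ (n+1)} \
           {ω | f ω < ternBV (n+1) (fun k => if h : k < n then t ⟨k, h⟩ else true)}) := by
        ext ω
        simp only [Set.mem_iUnion, Set.mem_diff, Set.mem_setOf_eq, not_lt]
        constructor
        · intro hω
          refine ⟨fun k => decide (ω ∈ J k), ?_⟩
          have hd : ∀ k < n + 1, (ω ∈ J k ↔
              (if h : k < n then decide (ω ∈ J (⟨k, h⟩ : Fin n).val) else true) = true) := by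
            intro k hk
            by_cases h : k < n
            · simp [h]
            · have : k = n := by omega
              subst this
              simp [h, hω]
          have := (tern_master J f hf (n+1) _ ω).mp hd
          exact ⟨this.2, this.1⟩
        · rintro ⟨t, h1, h2⟩
          have := (tern_master J f hf (n+1)
            (fun k => if h : k < n then t ⟨k, h⟩ else true) ω).mpr ⟨h2, h1⟩
          have hn := this n (by omega)
          simp at hn
          exact hn
      rw [key]
      apply MeasurableSet.iUnion
      intro t
      set s : ℕ → Bool := fun k => if h : k < n then t ⟨k, h⟩ else true with hs
      have hv0 : 0 ≤ ternBV (n+1) s := ternBV_nonneg _ _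
      have hvle : ternBV (n+1) s ≤ (1 - (3:ℝ)⁻¹ ^ (n+1)) / 2 := ternBV_le _ _
      have h3 : (0:ℝ) < (3:ℝ)⁻¹ ^ (n+1) := by positivity
      have h31 : (3:ℝ)⁻¹ ^ (n+1) ≤ 1 := by
        apply pow_le_one₀ <;> norm_num
      apply MeasurableSet.diff
      · exact hIcc _ ⟨by linarith, by linarith⟩
      · exact hIcc _ ⟨hv0, by linarith⟩
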